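/- Fix a nonzero complex number ℏ and complex numbers δ, δ′, c, and set Δ(t) = e^t + e^{−t} − c(e^t − e^{−t}) and D(t) = Δ(t)² − (e^t − e^{−t})²·δδ′. Let U ⊆ ℂ be a simply connected open set containing 0 on which D has no zeros, and let g : U → ℂ be the holomorphic function with g(t)² = D(t) and g(0) = 2. Then the function f(t,u,v) = (2/g(t))·exp( (1/(iℏ))·((e^t − e^{−t})/D(t))·( (e^t − e^{−t})(δ′u² + δv²) + 2Δ(t)uv ) ) is holomorphic on U × ℂ², satisfies f(0,u,v) = 1, and solves the K-ordered evolution equation ∂_t f = (c + 2uv/(iℏ))·f + ((c+1)u + δv)·∂_u f + (δ′u + (c−1)v)·∂_v f + (iℏ/2)·( δ(c+1)·∂_u² f + (δδ′ + c² − 1)·∂_u∂_v f + δ′(c−1)·∂_v² f ) on U × ℂ². -/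

import Mathlib

open Complex


private lemma quad_x (a b m y x : ℂ) :
    HasDerivAt (fun s : ℂ => a*s^2 + b*y^2 + m*s*y) (2*a*x + m*y) x := by
  have hp : HasDerivAt (fun s : ℂ => s^2) (2*x) x := by simpa using hasDerivAt_pow 2 x
  have h2 : HasDerivAt (fun s : ℂ => m*s*y) (m*y) x := by
    simpa using ((hasDerivAt_id x).const_mul m).mul_const y
  have := ((hp.const_mul a).add_const (b*y^2)).add h2
  convert this using 1 <;> first | rfl | ring

private lemma quad_y (a b m x y : ℂ) :
    HasDerivAt (fun s : ℂ => a*x^2 + b*s^2 + m*x*s) (2*b*y + m*x) y := by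
  have hp : HasDerivAt (fun s : ℂ => s^2) (2*y) y := by simpa using hasDerivAt_pow 2 y
  have h2 : HasDerivAt (fun s : ℂ => m*x*s) (m*x) y := by
    simpa using (hasDerivAt_id y).const_mul (m*x)
  have := (((hp.const_mul b).const_add (a*x^2)).add h2)
  convert this using 1 <;> first | rfl | ring

private lemma kexp_x (K a b m y x : ℂ) :
    HasDerivAt (fun s : ℂ => K * exp (a*s^2 + b*y^2 + m*s*y))
      ((2*a*x + m*y) * (K * exp (a*x^2 + b*y^2 + m*x*y))) x := by
  have := ((quad_x a b m y x).cexp).const_mul K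
  convert this using 1 <;> first | rfl | ring

private lemma kexp_y (K a b m x y : ℂ) :
    HasDerivAt (fun s : ℂ => K * exp (a*x^2 + b*s^2 + m*x*s))
      ((2*b*y + m*x) * (K * exp (a*x^2 + b*y^2 + m*x*y))) y := by
  have := ((quad_y a b m x y).cexp).const_mul K
  convert this using 1 <;> first | rfl | ring

set_option maxHeartbeats 4000000 in

set_option maxHeartbeats 1000000 in
private lemma coeff_eq (ι DD S C c δ δ' u v : ℂ) (hι : ι ≠ 0) (hDD0 : DD ≠ 0)
    (hR : DD = (C - c*S)^2 - S^2*(δ*δ')) :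
    -((2*(C - c*S)*(S - c*C) - 2*S*C*(δ*δ')) / (2*DD))
      + (1/ι * ((C*DD - S*(2*(C - c*S)*(S - c*C) - 2*S*C*(δ*δ')))/DD^2)
          * (S*(δ'*u^2 + δ*v^2) + 2*(C - c*S)*u*v)
        + 1/ι * (S/DD) * (C*(δ'*u^2 + δ*v^2) + 2*(S - c*C)*u*v))
    = (c + 2*u*v/ι)
      + ((c+1)*u + δ*v) * (2*(1/ι*(S/DD)*(S*δ'))*u + 1/ι*(S/DD)*(2*(C - c*S))*v)
      + (δ'*u + (c-1)*v) * (2*(1/ι*(S/DD)*(S*δ))*v + 1/ι*(S/DD)*(2*(C - c*S))*u)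
      + ι/2 * (δ*(c+1)*(2*(1/ι*(S/DD)*(S*δ'))
            + (2*(1/ι*(S/DD)*(S*δ'))*u + 1/ι*(S/DD)*(2*(C - c*S))*v)^2)
        + (δ*δ' + c^2 - 1)*(1/ι*(S/DD)*(2*(C - c*S))
            + (2*(1/ι*(S/DD)*(S*δ))*v + 1/ι*(S/DD)*(2*(C - c*S))*u)
              * (2*(1/ι*(S/DD)*(S*δ'))*u + 1/ι*(S/DD)*(2*(C - c*S))*v))
        + δ'*(c-1)*(2*(1/ι*(S/DD)*(S*δ))
            + (2*(1/ι*(S/DD)*(S*δ))*v + 1/ι*(S/DD)*(2*(C - c*S))*u)^2)) := by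
  have hJ : ι * ι⁻¹ = 1 := mul_inv_cancel₀ hι
  have hE : DD * DD⁻¹ = 1 := mul_inv_cancel₀ hDD0
  linear_combination ((1:ℂ)*DD⁻¹*S*C + (-1:ℂ)*DD⁻¹*S*C*δ*δ' + (-1:ℂ)*DD⁻¹*S*C*c^2 + (-1:ℂ)*DD⁻¹*S^2*c + (-1:ℂ)*DD⁻¹*S^2*c*δ*δ' + (1:ℂ)*DD⁻¹*S^2*c^3 + (2:ℂ)*ι⁻¹*DD⁻¹^2*S^2*C^2*u*v + (2:ℂ)*ι⁻¹*DD⁻¹^2*S^2*C^2*δ'*u^2 + (-2:ℂ)*ι⁻¹*DD⁻¹^2*S^2*C^2*δ*v^2 + (-2:ℂ)*ι⁻¹*DD⁻¹^2*S^2*C^2*δ*δ'*u*v + (-2:ℂ)*ι⁻¹*DD⁻¹^2*S^2*C^2*c*δ'*u^2 + (-2:ℂ)*ι⁻¹*DD⁻¹^2*S^2*C^2*c*δ*v^2 + (-2:ℂ)*ι⁻¹*DD⁻¹^2*S^2*C^2*c^2*u*v + (2:ℂ)*ι⁻¹*DD⁻¹^2*S^3*C*δ'*u^2 + (2:ℂ)*ι⁻¹*DD⁻¹^2*S^3*C*δ*v^2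 + (-2:ℂ)*ι⁻¹*DD⁻¹^2*S^3*C*δ*δ'^2*u^2 + (-2:ℂ)*ι⁻¹*DD⁻¹^2*S^3*C*δ^2*δ'*v^2 + (-4:ℂ)*ι⁻¹*DD⁻¹^2*S^3*C*c*u*v + (-4:ℂ)*ι⁻¹*DD⁻¹^2*S^3*C*c*δ'*u^2 + (4:ℂ)*ι⁻¹*DD⁻¹^2*S^3*C*c*δ*v^2 + (-4:ℂ)*ι⁻¹*DD⁻¹^2*S^3*C*c*δ*δ'*u*v + (2:ℂ)*ι⁻¹*DD⁻¹^2*S^3*C*c^2*δ'*u^2 + (2:ℂ)*ι⁻¹*DD⁻¹^2*S^3*C*c^2*δ*v^2 + (4:ℂ)*ι⁻¹*DD⁻¹^2*S^3*C*c^3*u*v + (2:ℂ)*ι⁻¹*DD⁻¹^2*S^4*δ*δ'*u*v + (-2:ℂ)*ι⁻¹*DD⁻¹^2*S^4*δ*δ'^2*u^2 + (2:ℂ)*ι⁻¹*DD⁻¹^2*S^4*δ^2*δ'*v^2 + (-2:ℂ)*ι⁻¹*DD⁻¹^2*S^4*δ^2*δ'^2*u*v + (-2:ℂ)*ι⁻¹*DD⁻¹^2*S^4*c*δ'*u^2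 + (-2:ℂ)*ι⁻¹*DD⁻¹^2*S^4*c*δ*v^2 + (2:ℂ)*ι⁻¹*DD⁻¹^2*S^4*c^2*u*v + (2:ℂ)*ι⁻¹*DD⁻¹^2*S^4*c^2*δ'*u^2 + (-2:ℂ)*ι⁻¹*DD⁻¹^2*S^4*c^2*δ*v^2 + (4:ℂ)*ι⁻¹*DD⁻¹^2*S^4*c^2*δ*δ'*u*v + (-2:ℂ)*ι⁻¹*DD⁻¹^2*S^4*c^4*u*v) * hJ + ((1:ℂ)*c + (2:ℂ)*ι⁻¹*u*v + (2:ℂ)*ι⁻¹*DD⁻¹*C^2*u*v + (1:ℂ)*ι⁻¹*DD⁻¹*S*C*δ'*u^2 + (1:ℂ)*ι⁻¹*DD⁻¹*S*C*δ*v^2 + (2:ℂ)*ι⁻¹*DD⁻¹*S*C*c*u*v + (-2:ℂ)*ι⁻¹*DD⁻¹*S^2*u*v + (2:ℂ)*ι⁻¹*DD⁻¹*S^2*δ'*u^2 + (-2:ℂ)*ι⁻¹*DD⁻¹*S^2*δ*v^2 + (2:ℂ)*ι⁻¹*DD⁻¹*S^2*δ*δ'*u*v + (-2:ℂ)*ι⁻¹*DD⁻¹*S^2*c^2*u*v)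 * hE + ((-1:ℂ)*DD⁻¹*c + (-2:ℂ)*ι⁻¹*DD⁻¹*u*v + (-4:ℂ)*ι⁻¹*DD⁻¹^2*S*C*c*u*v + (2:ℂ)*ι⁻¹*DD⁻¹^2*S^2*u*v + (-2:ℂ)*ι⁻¹*DD⁻¹^2*S^2*δ'*u^2 + (2:ℂ)*ι⁻¹*DD⁻¹^2*S^2*δ*v^2 + (-2:ℂ)*ι⁻¹*DD⁻¹^2*S^2*δ*δ'*u*v + (2:ℂ)*ι⁻¹*DD⁻¹^2*S^2*c^2*u*v) * hR

set_option maxHeartbeats 1000000 in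
theorem statement1 (ℏ δ δ' c : ℂ) (hℏ : ℏ ≠ 0)
    (Δ D : ℂ → ℂ)
    (hΔ : ∀ t, Δ t = exp t + exp (-t) - c * (exp t - exp (-t)))
    (hD : ∀ t, D t = (Δ t) ^ 2 - (exp t - exp (-t)) ^ 2 * (δ * δ'))
    (U : Set ℂ) (hUopen : IsOpen U) (hUsc : SimplyConnectedSpace U) (hU0 : (0 : ℂ) ∈ U)
    (hDne : ∀ t ∈ U, D t ≠ 0)
    (g : ℂ → ℂ) (hg : DifferentiableOn ℂ g U)
    (hg2 : ∀ t ∈ U, (g t) ^ 2 = D t) (hg0 : g 0 = 2)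
    (f : ℂ → ℂ → ℂ → ℂ)
    (hf : ∀ t u v, f t u v =
      2 / g t * exp ((1 / (Complex.I * ℏ)) * ((exp t - exp (-t)) / D t) *
        ((exp t - exp (-t)) * (δ' * u ^ 2 + δ * v ^ 2) + 2 * Δ t * u * v))) :
    DifferentiableOn ℂ (fun p : ℂ × ℂ × ℂ => f p.1 p.2.1 p.2.2) {p | p.1 ∈ U} ∧
    (∀ u v : ℂ, f 0 u v = 1) ∧
    (∀ t ∈ U, ∀ u v : ℂ,
      HasDerivAt (fun s => f s u v)
        ((c + 2 * u * v / (Complex.I * ℏ)) * f t u v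
          + ((c + 1) * u + δ * v) * deriv (fun x => f t x v) u
          + (δ' * u + (c - 1) * v) * deriv (fun y => f t u y) v
          + (Complex.I * ℏ / 2) *
            (δ * (c + 1) * iteratedDeriv 2 (fun x => f t x v) u
              + (δ * δ' + c ^ 2 - 1) * deriv (fun x => deriv (fun y => f t x y) v) u
              + δ' * (c - 1) * iteratedDeriv 2 (fun y => f t u y) v)) t) := by
  have hiℏ : Complex.I * ℏ ≠ 0 := mul_ne_zero I_ne_zero hℏ
  have hgne : ∀ s ∈ U, g s ≠ 0 := by
    intro s hs h0
    exact hDne s hs (by rw [← hg2 s hs, h0]; ring)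
  refine ⟨?_, ?_, ?_⟩
  · -- differentiability
    have hΔdiff : Differentiable ℂ Δ := by
      rw [funext hΔ]
      fun_prop
    have hDdiff : Differentiable ℂ D := by
      rw [funext hD]
      exact (hΔdiff.pow 2).sub (((Complex.differentiable_exp.sub
        (Complex.differentiable_exp.comp differentiable_neg)).pow 2).mul_const (δ * δ'))
    have hfst : Differentiable ℂ (fun p : ℂ × ℂ × ℂ => p.1) := differentiable_fst
    have hu : Differentiable ℂ (fun p : ℂ × ℂ × ℂ => p.2.1) := differentiable_fst.comp differentiable_snd
    have hv : Differentiable ℂ (fun p : ℂ × ℂ × ℂ => p.2.2) := differentiable_snd.comp differentiable_snd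
    have hSdiff : Differentiable ℂ (fun p : ℂ × ℂ × ℂ => exp p.1 - exp (-p.1)) := by fun_prop
    have hgV : DifferentiableOn ℂ (fun p : ℂ × ℂ × ℂ => g p.1) {p | p.1 ∈ U} :=
      hg.comp hfst.differentiableOn (fun (p : ℂ × ℂ × ℂ) hp => hp)
    have hKV : DifferentiableOn ℂ (fun p : ℂ × ℂ × ℂ => 2 / g p.1) {p | p.1 ∈ U} :=
by
      simp only [div_eq_mul_inv]
      exact (hgV.inv (fun (p : ℂ × ℂ × ℂ) hp => hgne p.1 hp)).const_mul 2
    have hDV : DifferentiableOn ℂ (fun p : ℂ × ℂ × ℂ => D p.1) {p | p.1 ∈ U} :=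
      (hDdiff.comp hfst).differentiableOn
    have hq : DifferentiableOn ℂ
        (fun p : ℂ × ℂ × ℂ => 1 / (Complex.I * ℏ) * ((exp p.1 - exp (-p.1)) / D p.1))
        {p | p.1 ∈ U} :=
by
      have hSV : DifferentiableOn ℂ (fun p : ℂ × ℂ × ℂ => exp p.1 - exp (-p.1)) {p | p.1 ∈ U} :=
        hSdiff.differentiableOn
      have hq0 : DifferentiableOn ℂ (fun p : ℂ × ℂ × ℂ => (exp p.1 - exp (-p.1)) / D p.1)
          {p | p.1 ∈ U} := by
        simp only [div_eq_mul_inv]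
        exact hSV.mul (hDV.inv (fun (p : ℂ × ℂ × ℂ) hp => hDne p.1 hp))
      exact hq0.const_mul _
    have hlinV : DifferentiableOn ℂ
        (fun p : ℂ × ℂ × ℂ => (exp p.1 - exp (-p.1)) * (δ' * p.2.1 ^ 2 + δ * p.2.2 ^ 2)
          + 2 * Δ p.1 * p.2.1 * p.2.2) {p | p.1 ∈ U} := by
      apply DifferentiableOn.add
      · exact hSdiff.differentiableOn.mul (((hu.pow 2).const_mul δ').add
          ((hv.pow 2).const_mul δ)).differentiableOn
      · exact ((((hΔdiff.comp hfst).const_mul 2).mul hu).mul hv).differentiableOn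
    have hFV : DifferentiableOn ℂ
        (fun p : ℂ × ℂ × ℂ => 2 / g p.1 * exp (1 / (Complex.I * ℏ) *
          ((exp p.1 - exp (-p.1)) / D p.1) *
          ((exp p.1 - exp (-p.1)) * (δ' * p.2.1 ^ 2 + δ * p.2.2 ^ 2) + 2 * Δ p.1 * p.2.1 * p.2.2)))
        {p | p.1 ∈ U} := hKV.mul ((hq.mul hlinV).cexp)
    exact hFV.congr (fun p hp => hf p.1 p.2.1 p.2.2)
  · -- f 0 u v = 1
    intro u v
    rw [hf]
    norm_num [hg0]
  · intro t ht u v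
    have hDt : D t ≠ 0 := hDne t ht
    have hgt0 : g t ≠ 0 := hgne t ht
    set a : ℂ := 1 / (Complex.I * ℏ) * ((exp t - exp (-t)) / D t) * ((exp t - exp (-t)) * δ') with ha
    set b : ℂ := 1 / (Complex.I * ℏ) * ((exp t - exp (-t)) / D t) * ((exp t - exp (-t)) * δ) with hb
    set m : ℂ := 1 / (Complex.I * ℏ) * ((exp t - exp (-t)) / D t) * (2 * Δ t) with hm
    have hfeq : ∀ x y : ℂ, f t x y = 2 / g t * exp (a*x^2 + b*y^2 + m*x*y) := by
      intro x y
      rw [hf]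
      congr 2
      rw [ha, hb, hm]
      ring
    have hderiv_u : deriv (fun x => f t x v) u = (2*a*u + m*v) * f t u v := by
      rw [show (fun x => f t x v) = _ from funext fun x => hfeq x v,
        (kexp_x (2/g t) a b m v u).deriv, ← hfeq]
    have hderiv_v : deriv (fun y => f t u y) v = (2*b*v + m*u) * f t u v := by
      rw [show (fun y => f t u y) = _ from funext fun y => hfeq u y,
        (kexp_y (2/g t) a b m u v).deriv, ← hfeq]
    have hdu_fun : (deriv fun x => f t x v)
        = fun x => (2*a*x + m*v) * (2/g t * exp (a*x^2 + b*v^2 + m*x*v)) := by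
      funext x
      rw [show (fun x => f t x v) = _ from funext fun x' => hfeq x' v]
      exact (kexp_x (2/g t) a b m v x).deriv
    have hdv_fun : (deriv fun y => f t u y)
        = fun y => (2*b*y + m*u) * (2/g t * exp (a*u^2 + b*y^2 + m*u*y)) := by
      funext y
      rw [show (fun y => f t u y) = _ from funext fun y' => hfeq u y']
      exact (kexp_y (2/g t) a b m u y).deriv
    have hiter_u : iteratedDeriv 2 (fun x => f t x v) u
        = (2*a + (2*a*u + m*v)^2) * f t u v := by
      rw [show (2:ℕ) = 1+1 from rfl, iteratedDeriv_succ, iteratedDeriv_one, hdu_fun]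
      have hl : HasDerivAt (fun x : ℂ => 2*a*x + m*v) (2*a) u := by
        simpa using ((hasDerivAt_id u).const_mul (2*a)).add_const (m*v)
      erw [(hl.mul (kexp_x (2/g t) a b m v u)).deriv, ← hfeq]
      ring
    have hiter_v : iteratedDeriv 2 (fun y => f t u y) v
        = (2*b + (2*b*v + m*u)^2) * f t u v := by
      rw [show (2:ℕ) = 1+1 from rfl, iteratedDeriv_succ, iteratedDeriv_one, hdv_fun]
      have hl : HasDerivAt (fun y : ℂ => 2*b*y + m*u) (2*b) v := by
        simpa using ((hasDerivAt_id v).const_mul (2*b)).add_const (m*u)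
      erw [(hl.mul (kexp_y (2/g t) a b m u v)).deriv, ← hfeq]
      ring
    have hmix : deriv (fun x => deriv (fun y => f t x y) v) u
        = (m + (2*b*v + m*u) * (2*a*u + m*v)) * f t u v := by
      have hinner : (fun x => deriv (fun y => f t x y) v)
          = fun x => (2*b*v + m*x) * (2/g t * exp (a*x^2 + b*v^2 + m*x*v)) := by
        funext x
        rw [show (fun y => f t x y) = _ from funext fun y => hfeq x y]
        exact (kexp_y (2/g t) a b m x v).deriv
      rw [hinner]
      have hl : HasDerivAt (fun x : ℂ => 2*b*v + m*x) m u := by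
        simpa using ((hasDerivAt_id u).const_mul m).const_add (2*b*v)
      erw [(hl.mul (kexp_x (2/g t) a b m v u)).deriv, ← hfeq]
      ring
    -- time derivative pieces
    have hEneg : HasDerivAt (fun s : ℂ => exp (-s)) (-exp (-t)) t := by
      have := (Complex.hasDerivAt_exp (-t)).comp t (hasDerivAt_neg t)
      convert this using 1 <;> first | rfl | simp
    have hS : HasDerivAt (fun s : ℂ => exp s - exp (-s)) (exp t + exp (-t)) t := by
      have := (Complex.hasDerivAt_exp t).sub hEneg
      convert this using 1 <;> first | rfl | simp [sub_neg_eq_add]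
    have hC : HasDerivAt (fun s : ℂ => exp s + exp (-s)) (exp t - exp (-t)) t := by
      have := (Complex.hasDerivAt_exp t).add hEneg
      convert this using 1 <;> first | rfl | simp [sub_eq_add_neg]
    have hΔd : HasDerivAt Δ (exp t - exp (-t) - c*(exp t + exp (-t))) t := by
      rw [funext hΔ]
      exact hC.sub (hS.const_mul c)
    have hDd : HasDerivAt D
        (2*(exp t + exp (-t) - c*(exp t - exp (-t)))*(exp t - exp (-t) - c*(exp t + exp (-t)))
          - 2*(exp t - exp (-t))*(exp t + exp (-t))*(δ*δ')) t := by
      rw [funext hD]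
      have h3 := (hΔd.pow 2).sub ((hS.pow 2).mul_const (δ*δ'))
      convert h3 using 1 <;> first | rfl | (rw [hΔ]; push_cast; ring)
    have hgt : HasDerivAt g (deriv g t) t := (hg.differentiableAt (hUopen.mem_nhds ht)).hasDerivAt
    have hgsqd : HasDerivAt (fun s => g s ^ 2) (2 * g t * deriv g t) t := by
      have := hgt.pow 2
      convert this using 1 <;> first | rfl | (push_cast; ring)
    have hevent : (fun s => g s ^ 2) =ᶠ[nhds t] D :=
      Filter.eventuallyEq_of_mem (hUopen.mem_nhds ht) fun s hs => hg2 s hs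
    have hrel : 2 * g t * deriv g t
        = 2*(exp t + exp (-t) - c*(exp t - exp (-t)))*(exp t - exp (-t) - c*(exp t + exp (-t)))
          - 2*(exp t - exp (-t))*(exp t + exp (-t))*(δ*δ') :=
      (hgsqd.congr_of_eventuallyEq hevent.symm).unique hDd
    have hgd : deriv g t = g t *
        (2*(exp t + exp (-t) - c*(exp t - exp (-t)))*(exp t - exp (-t) - c*(exp t + exp (-t)))
          - 2*(exp t - exp (-t))*(exp t + exp (-t))*(δ*δ')) / (2 * D t) := by
      rw [← hg2 t ht]
      field_simp
      linear_combination hrel / 2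
    have hquot := hS.div hDd hDt
    have hψ1 := hquot.const_mul (1 / (Complex.I * ℏ))
    have hlin : HasDerivAt
        (fun s => (exp s - exp (-s)) * (δ' * u ^ 2 + δ * v ^ 2) + 2 * Δ s * u * v)
        ((exp t + exp (-t)) * (δ' * u ^ 2 + δ * v ^ 2)
          + 2 * (exp t - exp (-t) - c*(exp t + exp (-t))) * u * v) t := by
      have h3 := (hS.mul_const (δ' * u ^ 2 + δ * v ^ 2)).add
        (((hΔd.const_mul 2).mul_const u).mul_const v)
      convert h3 using 1 <;> first | rfl | skip
    have hψ := hψ1.mul hlin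
    have hKd0 : HasDerivAt (fun s => 2 / g s) ((0 * g t - 2 * deriv g t) / g t ^ 2) t :=
      (hasDerivAt_const t (2:ℂ)).div hgt hgt0
    have hKd : HasDerivAt (fun s => 2 / g s)
        (2 / g t * -((2*(exp t + exp (-t) - c*(exp t - exp (-t)))*(exp t - exp (-t) - c*(exp t + exp (-t)))
          - 2*(exp t - exp (-t))*(exp t + exp (-t))*(δ*δ')) / (2 * D t))) t := by
      convert hKd0 using 1
      rw [hgd]
      field_simp
      ring
    have hfd0 := hKd.mul hψ.cexp
    rw [hderiv_u, hderiv_v, hiter_u, hiter_v, hmix,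
      show (fun s => f s u v) = _ from funext fun s => hf s u v]
    convert hfd0 using 1 <;> try rfl
    rw [hf, ha, hb, hm]
    have hDt' := hDt
    simp only [hD, hΔ, Pi.mul_apply, Pi.div_apply] at hDt' ⊢
    revert hDt'
    generalize exp (1 / (Complex.I * ℏ) *
        ((exp t - exp (-t)) /
          ((exp t + exp (-t) - c * (exp t - exp (-t))) ^ 2 - (exp t - exp (-t)) ^ 2 * (δ * δ'))) *
        ((exp t - exp (-t)) * (δ' * u ^ 2 + δ * v ^ 2) +
          2 * (exp t + exp (-t) - c * (exp t - exp (-t))) * u * v)) = X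
    generalize exp t - exp (-t) = S
    generalize exp t + exp (-t) = C
    intro hDt'
    linear_combination (-(2 / g t * X)) *
      coeff_eq (Complex.I * ℏ) ((C - c*S)^2 - S^2*(δ*δ')) S C c δ δ' u v hiℏ hDt' rfl
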